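/- Let N ≥ 2 and let (T_ij) be a real symmetric N×N matrix whose entries satisfy both relations of the type-A reduction: e^{−T_ik} = e^{−T_ij} + e^{−T_jk} for all i < j < k, and e^{−T_ij} = e^{∑_{p=1}^N T_ip} − e^{∑_{q=1}^N T_jq} for all i < j. Then there exists a unique x ∈ ℝ^N with x_1 > x_2 > ⋯ > x_N > 0 such that e^{−T_ij} = x_i − x_j for all i < j and e^{T_ii} = x_i·∏_{q>i}(x_i − x_q)·∏_{q<i}(x_q − x_i) for all i; namely x_i = e^{∑_{p=1}^N T_ip}. -/
import Mathlib


open Real Finset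

/-- The type-A reduction: a system of algebraic relations on a symmetric matrix `T`. -/
def typeAReduction {N : ℕ} (T : Fin N → Fin N → ℝ) : Prop :=
  (∀ i j k : Fin N, i < j → j < k →
      Real.exp (-(T i k)) = Real.exp (-(T i j)) + Real.exp (-(T j k))) ∧
  (∀ i j : Fin N, i < j →
      Real.exp (-(T i j)) = Real.exp (∑ p, T i p) - Real.exp (∑ q, T j q))

/-- a symmetric matrix satisfying the type-A reduction is the Hessian
value of the type A prepotential at a unique point of the cone, namely
`x_i = e^{∑_p T_ip}`. -/
theorem typeA_reduction_unique_point (N : ℕ) (hN : 2 ≤ N) (T : Fin N → Fin N → ℝ)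
    (hsym : ∀ i j : Fin N, T j i = T i j) (hred : typeAReduction T) :
    (∃! x : Fin N → ℝ, (StrictAnti x ∧ ∀ i, 0 < x i) ∧
      (∀ i j : Fin N, i < j → Real.exp (-(T i j)) = x i - x j) ∧
      (∀ i : Fin N, Real.exp (T i i) =
        x i * (∏ q ∈ Finset.univ.filter (fun q => i < q), (x i - x q))
            * (∏ q ∈ Finset.univ.filter (fun q => q < i), (x q - x i)))) ∧
    (let x : Fin N → ℝ := fun i => Real.exp (∑ p, T i p)
     (StrictAnti x ∧ ∀ i, 0 < x i) ∧
      (∀ i j : Fin N, i < j → Real.exp (-(T i j)) = x i - x j) ∧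
      (∀ i : Fin N, Real.exp (T i i) =
        x i * (∏ q ∈ Finset.univ.filter (fun q => i < q), (x i - x q))
            * (∏ q ∈ Finset.univ.filter (fun q => q < i), (x q - x i)))) := by
  obtain ⟨h1, h2⟩ := hred
  set x : Fin N → ℝ := fun i => Real.exp (∑ p, T i p) with hxdef
  have hdiff : ∀ i j : Fin N, i < j → Real.exp (-(T i j)) = x i - x j := h2
  have hpos : ∀ i, 0 < x i := fun i => Real.exp_pos _
  have hanti : StrictAnti x := by
    intro i j hij
    have h := hdiff i j hij
    have := Real.exp_pos (-(T i j))
    linarith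
  have hdisj : ∀ i : Fin N,
      Disjoint (univ.filter (fun q => i < q)) (univ.filter (fun q : Fin N => q < i)) := by
    intro i
    rw [Finset.disjoint_left]
    intro q hq1 hq2
    simp only [mem_filter, mem_univ, true_and] at hq1 hq2
    exact absurd hq2 (asymm hq1)
  have hpart : ∀ i : Fin N, (univ.erase i) =
      univ.filter (fun q => i < q) ∪ univ.filter (fun q : Fin N => q < i) := by
    intro i
    ext q
    simp only [mem_erase, mem_union, mem_filter, mem_univ, true_and, and_true]
    exact ⟨fun h => h.lt_or_gt.symm, fun h => h.elim (fun h => h.ne') (fun h => h.ne)⟩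
  have hsum : ∀ i : Fin N, ∑ q, T i q = T i i +
      (∑ q ∈ univ.filter (fun q => i < q), T i q +
        ∑ q ∈ univ.filter (fun q : Fin N => q < i), T i q) := by
    intro i
    have h := Finset.add_sum_erase univ (T i) (mem_univ i)
    rw [hpart i, Finset.sum_union (hdisj i)] at h
    linarith
  have hfac1 : ∀ i : Fin N, ∏ q ∈ univ.filter (fun q => i < q), (x i - x q) =
      Real.exp (∑ q ∈ univ.filter (fun q => i < q), -(T i q)) := by
    intro i
    rw [Real.exp_sum]
    exact Finset.prod_congr rfl fun q hq =>
      (hdiff i q (mem_filter.mp hq).2).symm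
  have hfac2 : ∀ i : Fin N, ∏ q ∈ univ.filter (fun q : Fin N => q < i), (x q - x i) =
      Real.exp (∑ q ∈ univ.filter (fun q : Fin N => q < i), -(T i q)) := by
    intro i
    rw [Real.exp_sum]
    refine Finset.prod_congr rfl fun q hq => ?_
    rw [hsym q i]
    exact (hdiff q i (mem_filter.mp hq).2).symm
  have hdiag : ∀ i : Fin N, Real.exp (T i i) =
      x i * (∏ q ∈ univ.filter (fun q => i < q), (x i - x q))
          * (∏ q ∈ univ.filter (fun q : Fin N => q < i), (x q - x i)) := by
    intro i
    rw [hfac1 i, hfac2 i, hxdef]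
    simp only [Finset.sum_neg_distrib, ← Real.exp_add]
    congr 1
    have := hsum i
    linarith
  have main : (StrictAnti x ∧ ∀ i, 0 < x i) ∧
      (∀ i j : Fin N, i < j → Real.exp (-(T i j)) = x i - x j) ∧
      (∀ i : Fin N, Real.exp (T i i) =
        x i * (∏ q ∈ Finset.univ.filter (fun q => i < q), (x i - x q))
            * (∏ q ∈ Finset.univ.filter (fun q => q < i), (x q - x i))) :=
    ⟨⟨hanti, hpos⟩, hdiff, hdiag⟩
  refine ⟨⟨x, main, ?_⟩, main⟩
  rintro y ⟨⟨hya, hyp⟩, hy2, hy3⟩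
  funext i
  have hP1 : ∏ q ∈ univ.filter (fun q => i < q), (y i - y q) =
      ∏ q ∈ univ.filter (fun q => i < q), (x i - x q) :=
    Finset.prod_congr rfl fun q hq =>
      ((hy2 i q (mem_filter.mp hq).2).symm.trans (hdiff i q (mem_filter.mp hq).2))
  have hP2 : ∏ q ∈ univ.filter (fun q : Fin N => q < i), (y q - y i) =
      ∏ q ∈ univ.filter (fun q : Fin N => q < i), (x q - x i) :=
    Finset.prod_congr rfl fun q hq =>
      ((hy2 q i (mem_filter.mp hq).2).symm.trans (hdiff q i (mem_filter.mp hq).2))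
  have hPpos : 0 < (∏ q ∈ univ.filter (fun q => i < q), (x i - x q))
      * (∏ q ∈ univ.filter (fun q : Fin N => q < i), (x q - x i)) := by
    apply mul_pos
    · exact Finset.prod_pos fun q hq => sub_pos.mpr (hanti (mem_filter.mp hq).2)
    · exact Finset.prod_pos fun q hq => sub_pos.mpr (hanti (mem_filter.mp hq).2)
  have heq : y i * ((∏ q ∈ univ.filter (fun q => i < q), (x i - x q))
      * (∏ q ∈ univ.filter (fun q : Fin N => q < i), (x q - x i)))
      = x i * ((∏ q ∈ univ.filter (fun q => i < q), (x i - x q))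
      * (∏ q ∈ univ.filter (fun q : Fin N => q < i), (x q - x i))) := by
    have h1 := hy3 i
    have h2 := hdiag i
    rw [hP1, hP2] at h1
    rw [← mul_assoc, ← h1, ← mul_assoc, ← h2]
  exact mul_right_cancel₀ (ne_of_gt hPpos) heq
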